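/- For the family T(c) of tuples (b_1,…,b_k) with b_i ≥ 2 and Σb_i − (k−1) = c, define M(c) = |{tuples in T(c) ending with the pattern (2, 3^{[m]}, 2, 2) for some m ≥ 1}|. Then for c ≥ 6, M(c) = M(c−2) + j(c−6) + (−1)^c·[3 ∣ c], where j(d) = (2^d−(−1)^d)/3, with initial values M(4)=M(5)=0. -/

import Mathlib

def jac (c : ℕ) : ℤ := (2 ^ c - (-1 : ℤ) ^ c) / 3

/-- `Tset c`: nonempty tuples `(b_1,…,b_k)` with each `b_i ≥ 2` and `Σ b_i − (k−1) = c`. -/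
def Tset (c : ℕ) : Set (List ℤ) :=
  {l | l ≠ [] ∧ (∀ b ∈ l, 2 ≤ b) ∧ l.sum - ((l.length : ℤ) - 1) = (c : ℤ)}

/-- The continuant of a subtractive continued fraction: the value of `[b_1,…,b_k]₋`
is `cont (b_2,…,b_k) / cont (b_1,…,b_k)`.  The tuple represents a knot (rather than a
2-component link) exactly when `cont` of the tuple is odd. -/
def cont : List ℤ → ℤ
  | [] => 1
  | [b] => b
  | b :: b' :: rest => b * cont (b' :: rest) - cont rest

/-- `M c` counts the tuples in `Tset c` representing knots that end with the pattern
`(2, 3^{[m]}, 2, 2)` for some `m ≥ 1` (the set `K_{2 3^{[m≥1]} 2 2}(c)`). -/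
noncomputable def M (c : ℕ) : ℕ :=
  Nat.card {l : List ℤ | l ∈ Tset c ∧ Odd (cont l) ∧
    ∃ m : ℕ, 1 ≤ m ∧ ∃ pre : List ℤ, l = pre ++ [2] ++ List.replicate m 3 ++ [2, 2]}

-- ### auxiliary defs
abbrev V2 := ZMod 2 × ZMod 2

def E : List ℤ → V2 → V2
  | [], v => v
  | (b :: l), v => ((b : ZMod 2) * (E l v).1 - (E l v).2, (E l v).1)

def sw (u : V2) : V2 := (u.2, u.1)
def tu (u : V2) : V2 := (u.1 + u.2, u.2)

def incF : List ℤ → List ℤ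
  | [] => []
  | (b :: t) => (b + 1) :: t

def P : ℕ → Finset (List ℤ)
  | 0 => {([] : List ℤ)}
  | (w+1) => (P w).image (List.cons 2) ∪ ((P w).filter (· ≠ [])).image incF

def Hm : ℕ → V2 → V2 → ℕ
  | 0, v, u => if u = v then 1 else 0
  | 1, v, u => if u = sw v then 1 else 0
  | (w+2), v, u => Hm (w+1) v (sw u) + Hm (w+1) v (tu u)

def g (v : V2) (w : ℕ) : ℕ := Hm w v (1, 0) + Hm w v (1, 1)

def jacN : ℕ → ℕ
  | 0 => 0
  | 1 => 1
  | (n+2) => jacN (n+1) + 2 * jacN n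

def sv (m : ℕ) : V2 := E (2 :: List.replicate m 3) (1, 0)

def suff (m : ℕ) : List ℤ := 2 :: (List.replicate m (3:ℤ) ++ [2, 2])

-- basic sanity decides
example : sv 0 = (0, 1) := by decide
example : sv 1 = (1, 1) := by decide
example : sv 2 = (1, 0) := by decide
example : g ((1:ZMod 2), (1:ZMod 2)) 2 = 1 := by decide
example : ∀ y : V2, E [3,3,3] y = y := by decide
example : jacN 5 = 11 := by decide

-- ### E lemmas
lemma E_nil (v : V2) : E [] v = v := rfl

lemma E_cons (b : ℤ) (l : List ℤ) (v : V2) :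
    E (b :: l) v = ((b : ZMod 2) * (E l v).1 - (E l v).2, (E l v).1) := rfl

lemma E_two (l : List ℤ) (v : V2) : E (2 :: l) v = sw (E l v) := by
  have h : ∀ x : V2, (((2:ℤ) : ZMod 2) * x.1 - x.2, x.1) = sw x := by decide
  rw [E_cons]; exact h _

lemma E_incF (b : ℤ) (t : List ℤ) (v : V2) :
    E (incF (b :: t)) v = tu (E (b :: t) v) := by
  show E ((b+1) :: t) v = tu (E (b :: t) v)
  rw [E_cons, E_cons]
  have : ((b + 1 : ℤ) : ZMod 2) = (b : ZMod 2) + 1 := by push_cast; ring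
  rw [this]; unfold tu; simp; ring

lemma sw_sw (u : V2) : sw (sw u) = u := rfl
lemma tu_tu : ∀ u : V2, tu (tu u) = u := by decide

-- ### P characterization
lemma sum_ge_two_mul {l : List ℤ} (h : ∀ b ∈ l, 2 ≤ b) : 2 * (l.length : ℤ) ≤ l.sum := by
  induction l with
  | nil => simp
  | cons b t ih =>
      have hb := h b (by simp)
      have ht := ih (fun x hx => h x (by simp [hx]))
      simp only [List.sum_cons, List.length_cons]
      push_cast; linarith

lemma mem_P {w : ℕ} {l : List ℤ} :
    l ∈ P w ↔ (∀ b ∈ l, 2 ≤ b) ∧ l.sum = (w : ℤ) + l.length := by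
  induction w generalizing l with
  | zero =>
      simp only [P, Finset.mem_singleton]
      constructor
      · rintro rfl; simp
      · rintro ⟨h1, h2⟩
        cases l with
        | nil => rfl
        | cons b t =>
            exfalso
            have := sum_ge_two_mul h1
            simp only [List.length_cons] at h2 this
            push_cast at h2 this
            have hlen : (0:ℤ) ≤ t.length := by positivity
            omega
  | succ w ih =>
      simp only [P, Finset.mem_union, Finset.mem_image, Finset.mem_filter]
      constructor
      · rintro (⟨t, ht, rfl⟩ | ⟨t, ⟨ht, hne⟩, rfl⟩)
        · obtain ⟨h1, h2⟩ := ih.mp ht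
          refine ⟨?_, ?_⟩
          · intro b hb; rcases List.mem_cons.mp hb with rfl | hb
            · norm_num
            · exact h1 b hb
          · simp only [List.sum_cons, List.length_cons, h2]; push_cast; ring
        · obtain ⟨h1, h2⟩ := ih.mp ht
          cases t with
          | nil => exact absurd rfl hne
          | cons b r =>
              refine ⟨?_, ?_⟩
              · intro x hx
                simp only [incF, List.mem_cons] at hx
                rcases hx with rfl | hx
                · have := h1 b (by simp); omega
                · exact h1 x (by simp [hx])
              · simp only [incF, List.sum_cons, List.length_cons] at h2 ⊢
                push_cast at h2 ⊢; linarith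
      · rintro ⟨h1, h2⟩
        cases l with
        | nil => exfalso; simp at h2; omega
        | cons b t =>
            have hb : 2 ≤ b := h1 b (by simp)
            by_cases hb2 : b = 2
            · left
              refine ⟨t, ih.mpr ⟨fun x hx => h1 x (by simp [hx]), ?_⟩, by rw [hb2]⟩
              subst hb2
              simp only [List.sum_cons, List.length_cons] at h2
              push_cast at h2 ⊢; linarith
            · right
              refine ⟨(b-1) :: t, ⟨ih.mpr ⟨?_, ?_⟩, by simp⟩, ?_⟩
              · intro x hx; rcases List.mem_cons.mp hx with rfl | hx
                · omega
                · exact h1 x (by simp [hx])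
              · simp only [List.sum_cons, List.length_cons] at h2 ⊢
                push_cast at h2 ⊢; linarith
              · simp only [incF]; norm_num

lemma P_mem_ge_two {w : ℕ} {l : List ℤ} (h : l ∈ P w) : ∀ b ∈ l, 2 ≤ b := (mem_P.mp h).1

lemma P_not_nil {w : ℕ} (hw : w ≠ 0) : ([] : List ℤ) ∉ P w := by
  intro h
  have := (mem_P.mp h).2
  simp at this
  omega

-- ### Hc: actual counts
noncomputable def Hc (w : ℕ) (v u : V2) : ℕ :=
  ((P w).filter (fun pre => E pre v = u)).card

lemma Hc_zero (v u : V2) : Hc 0 v u = if u = v then 1 else 0 := by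
  unfold Hc
  show ((({([]:List ℤ)}) : Finset (List ℤ)).filter _).card = _
  rw [Finset.filter_singleton]
  simp only [E_nil]
  rcases eq_or_ne u v with rfl | h
  · simp
  · simp [h, Ne.symm h]

lemma P_one : P 1 = {([(2:ℤ)] : List ℤ)} := by
  show (P 0).image (List.cons 2) ∪ ((P 0).filter (· ≠ [])).image incF = _
  show (({([]:List ℤ)}) : Finset (List ℤ)).image (List.cons 2) ∪
      ((({([]:List ℤ)}) : Finset (List ℤ)).filter (· ≠ [])).image incF = _
  rw [Finset.filter_singleton]
  simp

lemma Hc_one (v u : V2) : Hc 1 v u = if u = sw v then 1 else 0 := by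
  unfold Hc
  rw [P_one, Finset.filter_singleton]
  have : E [(2:ℤ)] v = sw v := by rw [E_two]; rfl
  rw [this]
  rcases eq_or_ne u (sw v) with rfl | h
  · simp
  · rw [if_neg (Ne.symm h), if_neg h]; simp

lemma Hc_rec (w : ℕ) (v u : V2) :
    Hc (w+2) v u = Hc (w+1) v (sw u) + Hc (w+1) v (tu u) := by
  unfold Hc
  have hP : P (w+2) = (P (w+1)).image (List.cons 2) ∪ ((P (w+1)).filter (· ≠ [])).image incF := rfl
  have hfil : (P (w+1)).filter (· ≠ ([] : List ℤ)) = P (w+1) := by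
    apply Finset.filter_true_of_mem
    intro x hx
    intro hxe
    exact P_not_nil (by omega) (hxe ▸ hx)
  rw [hP, hfil, Finset.filter_union]
  rw [Finset.card_union_of_disjoint, Finset.filter_image, Finset.filter_image]
  · congr 1
    · rw [Finset.card_image_of_injective _ (List.cons_injective)]
      congr 1
      apply Finset.filter_congr
      intro x _
      rw [E_two]
      constructor
      · intro h; simp only [← h, sw_sw]
      · intro h; rw [h, sw_sw]
    · rw [Finset.card_image_of_injOn]
      · congr 1
        apply Finset.filter_congr
        intro x hx
        cases x with
        | nil => exact absurd hx (P_not_nil (by omega))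
        | cons b t =>
            rw [E_incF]
            constructor
            · intro h; simp only [← h, tu_tu]
            · intro h; rw [h, tu_tu]
      · intro x hx y hy hxy
        simp only [Finset.coe_filter] at hx hy
        cases x with
        | nil => exact absurd hx.1 (P_not_nil (by omega))
        | cons a s =>
          cases y with
          | nil => exact absurd hy.1 (P_not_nil (by omega))
          | cons b t =>
              simp only [incF, List.cons.injEq] at hxy
              obtain ⟨h1, h2⟩ := hxy
              have : a = b := by omega
              simp [this, h2]
  · -- disjointness
    rw [Finset.disjoint_left]
    intro x hx hy
    simp only [Finset.mem_filter, Finset.mem_image] at hx hy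
    obtain ⟨⟨t, ht, rfl⟩, -⟩ := hx
    obtain ⟨⟨s, hs, hse⟩, -⟩ := hy
    cases s with
    | nil => exact absurd hs (P_not_nil (by omega))
    | cons b r =>
        have hb : 2 ≤ b := P_mem_ge_two hs b (by simp)
        simp only [incF, List.cons.injEq] at hse
        omega

lemma Hc_eq_Hm : ∀ w v u, Hc w v u = Hm w v u
  | 0, v, u => Hc_zero v u
  | 1, v, u => Hc_one v u
  | (w+2), v, u => by
      rw [Hc_rec, Hc_eq_Hm (w+1), Hc_eq_Hm (w+1)]
      rfl

-- ### model analysis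
lemma Hm_step (w : ℕ) (v u : V2) :
    Hm (w+2) v u = Hm (w+1) v (sw u) + Hm (w+1) v (tu u) := rfl

lemma Hm_e2 (w : ℕ) (v : V2) : Hm (w+2) v (0, 1) = g v (w+1) := by
  rw [Hm_step]
  have h1 : sw ((0:ZMod 2), (1:ZMod 2)) = (1, 0) := by decide
  have h2 : tu ((0:ZMod 2), (1:ZMod 2)) = (1, 1) := by decide
  rw [h1, h2]; rfl

lemma g_rec (v : V2) (w : ℕ) : g v (w+3) = g v (w+2) + 2 * g v (w+1) := by
  have e10 : Hm (w+3) v (1, 0) = Hm (w+2) v (0, 1) + Hm (w+2) v (1, 0) := by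
    rw [show w+3 = (w+1)+2 from rfl, Hm_step]
    have h1 : sw ((1:ZMod 2), (0:ZMod 2)) = (0, 1) := by decide
    have h2 : tu ((1:ZMod 2), (0:ZMod 2)) = (1, 0) := by decide
    rw [h1, h2]
  have e11 : Hm (w+3) v (1, 1) = Hm (w+2) v (1, 1) + Hm (w+2) v (0, 1) := by
    rw [show w+3 = (w+1)+2 from rfl, Hm_step]
    have h1 : sw ((1:ZMod 2), (1:ZMod 2)) = (1, 1) := by decide
    have h2 : tu ((1:ZMod 2), (1:ZMod 2)) = (0, 1) := by decide
    rw [h1, h2]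
  have he2 := Hm_e2 w v
  unfold g at *
  rw [e10, e11, he2]
  ring

lemma two_step {f h : ℕ → ℕ} (Hf : ∀ w, f (w+3) = f (w+2) + 2 * f (w+1))
    (Hh : ∀ w, h (w+3) = h (w+2) + 2 * h (w+1)) (e1 : f 1 = h 1) (e2 : f 2 = h 2) :
    ∀ w, f (w+1) = h (w+1) := by
  have key : ∀ w, f (w+1) = h (w+1) ∧ f (w+2) = h (w+2) := by
    intro w
    induction w with
    | zero => exact ⟨e1, e2⟩
    | succ n ih =>
        refine ⟨ih.2, ?_⟩
        rw [show n+1+2 = n+3 from rfl, Hf, Hh, ih.1, ih.2]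
  exact fun w => (key w).1

lemma jacN_rec (w : ℕ) : jacN (w+2) = jacN (w+1) + 2 * jacN w := rfl

lemma jacN_add (w : ℕ) : jacN (w+1) + jacN w = 2^w := by
  induction w with
  | zero => rfl
  | succ n ih =>
      rw [jacN_rec, pow_succ]
      omega

lemma jacN_two_step (w : ℕ) : jacN (w+2) = jacN w + 2^w := by
  have h1 := jacN_rec w
  have h2 := jacN_add w
  omega

lemma gA : ∀ w, g ((0:ZMod 2), (1:ZMod 2)) w = jacN w := by
  have h := two_step (f := g (0,1)) (h := jacN) (fun w => g_rec _ w) (fun w => jacN_rec (w+1))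
    (by decide) (by decide)
  intro w
  cases w with
  | zero => decide
  | succ n => exact h n

lemma gB : ∀ w, g ((1:ZMod 2), (1:ZMod 2)) (w+1) = jacN (w+1) :=
  two_step (f := g (1,1)) (h := jacN) (fun w => g_rec _ w) (fun w => jacN_rec (w+1))
    (by decide) (by decide)

lemma gC : ∀ w, g ((1:ZMod 2), (0:ZMod 2)) (w+1) = 2 * jacN w := by
  have h := two_step (f := g (1,0)) (h := fun n => 2 * jacN (n-1)) (fun w => g_rec _ w)
    (fun w => by show 2 * jacN (w+3-1) = 2 * jacN (w+2-1) + 2 * (2 * jacN (w+1-1)); rw [show w+3-1 = (w+1)+1 from rfl, show w+2-1 = w+1 from rfl,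
      show w+1-1 = w from rfl, jacN_rec]; ring)
    (by decide) (by decide)
  intro w
  have := h w
  simpa using this

lemma g_step (v : V2) (hv : v = (0,1) ∨ v = (1,1) ∨ v = (1,0)) (w : ℕ) :
    g v (w+2) + (if w = 0 ∧ v = ((1:ZMod 2), (1:ZMod 2)) then 1 else 0) = g v w + 2^w := by
  rcases hv with rfl | rfl | rfl
  · rw [if_neg (fun h => absurd h.2 (by decide))]
    rw [gA, gA, jacN_two_step]
    ring
  · cases w with
    | zero => rw [if_pos ⟨rfl, rfl⟩]; decide
    | succ n =>
        rw [if_neg (fun h => by exact absurd h.1 (by omega))]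
        rw [show n+1+2 = (n+2)+1 from rfl, gB, gB, jacN_two_step]
        ring
  · rw [if_neg (fun h => absurd h.2 (by decide))]
    cases w with
    | zero => decide
    | succ n =>
        rw [show n+1+2 = (n+2)+1 from rfl, gC, gC, jacN_two_step]
        ring

-- ### jac vs jacN
lemma three_jacN : ∀ n : ℕ, 3 * (jacN n : ℤ) = 2^n - (-1)^n := by
  have key : ∀ n, 3 * (jacN n : ℤ) = 2^n - (-1)^n ∧ 3 * (jacN (n+1) : ℤ) = 2^(n+1) - (-1)^(n+1) := by
    intro n
    induction n with
    | zero => constructor <;> norm_num [jacN]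
    | succ k ih =>
        refine ⟨ih.2, ?_⟩
        have h1 := ih.1
        have h2 := ih.2
        rw [jacN_rec]
        push_cast
        have e1 : ((-1:ℤ))^(k+1) = -(-1)^k := by ring
        have e2 : ((-1:ℤ))^(k+2) = (-1)^k := by ring
        have e3 : (2:ℤ)^(k+1) = 2 * 2^k := by ring
        have e4 : (2:ℤ)^(k+2) = 4 * 2^k := by ring
        rw [e2, e4]
        rw [e1, e3] at h2
        linarith
  exact fun n => (key n).1

lemma jac_eq_jacN (n : ℕ) : jac n = (jacN n : ℤ) := by
  unfold jac
  rw [← three_jacN n]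
  omega

-- ### sv facts
lemma E_append (l1 l2 : List ℤ) (v : V2) : E (l1 ++ l2) v = E l1 (E l2 v) := by
  induction l1 with
  | nil => rfl
  | cons b t ih => rw [List.cons_append, E_cons, E_cons, ih]

lemma sv_add_three (m : ℕ) : sv (m + 3) = sv m := by
  unfold sv
  have h : List.replicate (m+3) (3:ℤ) = [3,3,3] ++ List.replicate m 3 := by
    rw [show m + 3 = 3 + m by omega, List.replicate_add]; rfl
  rw [h]
  have h2 : (2:ℤ) :: ([3,3,3] ++ List.replicate m 3) = [2,3,3,3] ++ List.replicate m 3 := rfl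
  have h3 : (2:ℤ) :: List.replicate m 3 = [2] ++ List.replicate m 3 := rfl
  rw [h2, h3, E_append, E_append]
  have key : ∀ y : V2, E [(2:ℤ),3,3,3] y = E [2] y := by decide
  rw [key]

lemma sv_mod (m : ℕ) : sv m = sv (m % 3) := by
  induction m using Nat.strong_induction_on with
  | _ m ih =>
      rcases Nat.lt_or_ge m 3 with h | h
      · rw [Nat.mod_eq_of_lt h]
      · have h1 : m = (m - 3) + 3 := by omega
        rw [h1, sv_add_three, ih (m-3) (by omega)]
        congr 1
        omega

lemma sv_cases (m : ℕ) :
    sv m = if m % 3 = 0 then ((0:ZMod 2), (1:ZMod 2))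
      else if m % 3 = 1 then (1, 1) else (1, 0) := by
  rw [sv_mod]
  have h : m % 3 = 0 ∨ m % 3 = 1 ∨ m % 3 = 2 := by omega
  rcases h with h | h | h <;> rw [h] <;> simp <;> decide

-- ### cont and parity
lemma cont_cons (b : ℤ) (l : List ℤ) (h : l ≠ []) :
    cont (b :: l) = b * cont l - cont l.tail := by
  cases l with
  | nil => exact absurd rfl h
  | cons b' t => rfl

lemma odd_int_iff (n : ℤ) : Odd n ↔ (n : ZMod 2) = 1 := by
  constructor
  · intro h
    have h2 : ¬ ((2:ℤ) ∣ n) := by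
      rw [Int.odd_iff] at h
      omega
    have h3 : ((n : ZMod 2)) ≠ 0 := by
      rw [Ne, ZMod.intCast_zmod_eq_zero_iff_dvd]
      exact_mod_cast h2
    have h4 : ∀ x : ZMod 2, x ≠ 0 → x = 1 := by decide
    exact h4 _ h3
  · intro h
    have h3 : ¬ ((2:ℤ) ∣ n) := by
      intro hd
      have h0 : (n : ZMod 2) = 0 :=
        (ZMod.intCast_zmod_eq_zero_iff_dvd n 2).mpr (by exact_mod_cast hd)
      rw [h] at h0
      exact absurd h0 (by decide)
    rw [Int.odd_iff]
    omega

lemma st_append (pre s : List ℤ) (h : s ≠ []) :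
    (((cont (pre ++ s) : ℤ) : ZMod 2), ((cont ((pre ++ s).tail) : ℤ) : ZMod 2))
      = E pre (((cont s : ℤ) : ZMod 2), ((cont s.tail : ℤ) : ZMod 2)) := by
  induction pre with
  | nil => rfl
  | cons b t ih =>
      have hts : t ++ s ≠ [] := fun hc => by
        rcases List.append_eq_nil_iff.mp hc with ⟨-, h2⟩; exact h h2
      rw [List.cons_append, E_cons, ← ih]
      rw [cont_cons b (t ++ s) hts]
      have htl : (b :: (t ++ s)).tail = t ++ s := rfl
      rw [htl]
      push_cast
      rfl

-- ### suffix lemmas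
lemma suff_ne_nil (m : ℕ) : suff m ≠ [] := by simp [suff]

lemma suff_eq_append (m : ℕ) : suff m = (2 :: List.replicate m 3) ++ [2, 2] := by
  simp [suff]

lemma st_suff (m : ℕ) :
    (((cont (suff m) : ℤ) : ZMod 2), ((cont ((suff m).tail) : ℤ) : ZMod 2)) = sv m := by
  rw [suff_eq_append, st_append _ _ (by simp)]
  unfold sv
  congr 1

lemma odd_cond (pre : List ℤ) (m : ℕ) :
    Odd (cont (pre ++ suff m)) ↔ (E pre (sv m)).1 = 1 := by
  have h := st_append pre (suff m) (suff_ne_nil m)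
  rw [st_suff] at h
  have h1 : ((cont (pre ++ suff m) : ℤ) : ZMod 2) = (E pre (sv m)).1 := by
    rw [← h]
  rw [odd_int_iff, h1]

lemma suff_sum (m : ℕ) : (suff m).sum = 3 * (m : ℤ) + 6 := by
  simp [suff, List.sum_replicate, nsmul_eq_mul]
  ring

lemma suff_length (m : ℕ) : (suff m).length = m + 3 := by
  simp [suff]

lemma suff_mem (m : ℕ) : ∀ b ∈ suff m, (2:ℤ) ≤ b := by
  intro b hb
  simp only [suff, List.mem_cons, List.mem_append, List.mem_replicate] at hb
  rcases hb with rfl | (⟨-, rfl⟩ | hb) ; · norm_num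
  · norm_num
  · rcases hb with rfl | hb
    · norm_num
    · simp at hb; omega

-- ### uniqueness of the pattern decomposition
lemma rep_unique : ∀ (m m' : ℕ) (X Y : List ℤ),
    List.replicate m 3 ++ 2 :: X = List.replicate m' 3 ++ 2 :: Y → m = m' ∧ X = Y := by
  intro m
  induction m with
  | zero =>
      intro m' X Y h
      cases m' with
      | zero =>
          simp only [List.replicate_zero, List.nil_append, List.cons.injEq] at h
          exact ⟨rfl, h.2⟩
      | succ k =>
          simp only [List.replicate_zero, List.nil_append, List.replicate_succ,
            List.cons_append, List.cons.injEq] at h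
          exact absurd h.1 (by norm_num)
  | succ n ih =>
      intro m' X Y h
      cases m' with
      | zero =>
          simp only [List.replicate_zero, List.nil_append, List.replicate_succ,
            List.cons_append, List.cons.injEq] at h
          exact absurd h.1 (by norm_num)
      | succ k =>
          simp only [List.replicate_succ, List.cons_append, List.cons.injEq] at h
          obtain ⟨m_eq, X_eq⟩ := ih k X Y h.2
          exact ⟨by omega, X_eq⟩

lemma rev_form (p : List ℤ) (m : ℕ) :
    (p ++ suff m).reverse = 2 :: 2 :: (List.replicate m 3 ++ 2 :: p.reverse) := by
  simp [suff, List.reverse_append]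

lemma append_suff_inj {m m' : ℕ} {p q : List ℤ}
    (h : p ++ suff m = q ++ suff m') : m = m' ∧ p = q := by
  have hr : (p ++ suff m).reverse = (q ++ suff m').reverse := by rw [h]
  rw [rev_form, rev_form] at hr
  simp only [List.cons.injEq] at hr
  obtain ⟨-, -, hr⟩ := hr
  obtain ⟨hm, hp⟩ := rep_unique m m' _ _ hr
  exact ⟨hm, List.reverse_injective hp⟩

-- ### finite model for the counted set
def KF (c : ℕ) : Finset (List ℤ) :=
  (Finset.Icc 1 ((c - 4) / 2)).biUnion fun m =>
    ((P (c - 4 - 2 * m)).filter (fun pre => (E pre (sv m)).1 = 1)).image (· ++ suff m)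

lemma Kset_eq (c : ℕ) :
    {l : List ℤ | l ∈ Tset c ∧ Odd (cont l) ∧
      ∃ m : ℕ, 1 ≤ m ∧ ∃ pre : List ℤ, l = pre ++ [2] ++ List.replicate m 3 ++ [2, 2]}
    = ↑(KF c) := by
  ext l
  simp only [Set.mem_setOf_eq, Finset.mem_coe, KF, Finset.mem_biUnion,
    Finset.mem_image, Finset.mem_filter, Finset.mem_Icc]
  constructor
  · rintro ⟨⟨hne, hall, hsum⟩, hodd, m, hm, pre, rfl⟩
    have hl : pre ++ [2] ++ List.replicate m 3 ++ [2, 2] = pre ++ suff m := by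
      simp [suff]
    rw [hl] at hsum hodd hall ⊢
    have hpre : ∀ b ∈ pre, (2:ℤ) ≤ b := fun b hb => hall b (List.mem_append.mpr (Or.inl hb))
    have hsum2 : pre.sum - (pre.length : ℤ) = (c : ℤ) - 2 * m - 4 := by
      rw [List.sum_append, List.length_append, suff_sum, suff_length] at hsum
      push_cast at hsum ⊢
      linarith
    have hge : 2 * (pre.length : ℤ) ≤ pre.sum := sum_ge_two_mul hpre
    have hlen : (0:ℤ) ≤ (pre.length : ℤ) := by positivity
    have hc : 2 * m + 4 ≤ c := by
      have : (0:ℤ) ≤ (c:ℤ) - 2 * m - 4 := by linarith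
      push_cast at this
      omega
    refine ⟨m, ⟨hm, by omega⟩, pre, ⟨mem_P.mpr ⟨hpre, ?_⟩, (odd_cond pre m).mp hodd⟩, rfl⟩
    have hcast : ((c - 4 - 2 * m : ℕ) : ℤ) = (c:ℤ) - 2 * m - 4 := by
      push_cast [hc]
      omega
    rw [hcast]
    linarith
  · rintro ⟨m, ⟨hm1, hm2⟩, pre, ⟨hP, hcond⟩, rfl⟩
    have h2m : 2 * m ≤ c - 4 := by omega
    have hc6 : 6 ≤ c := by omega
    obtain ⟨hpre, hpsum⟩ := mem_P.mp hP
    have hl : pre ++ suff m = pre ++ [2] ++ List.replicate m 3 ++ [2, 2] := by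
      simp [suff]
    refine ⟨⟨?_, ?_, ?_⟩, (odd_cond pre m).mpr hcond, m, hm1, pre, hl⟩
    · intro hnil
      rcases List.append_eq_nil_iff.mp hnil with ⟨-, h2⟩
      exact suff_ne_nil m h2
    · intro b hb
      rcases List.mem_append.mp hb with hb | hb
      · exact hpre b hb
      · exact suff_mem m b hb
    · rw [List.sum_append, List.length_append, suff_sum, suff_length, hpsum]
      have hcast : ((c - 4 - 2 * m : ℕ) : ℤ) = (c:ℤ) - 2 * m - 4 := by push_cast; omega
      rw [hcast]
      push_cast
      ring

lemma M_eq (c : ℕ) : M c = (KF c).card := by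
  unfold M
  rw [Kset_eq c]
  rw [Nat.card_coe_set_eq, Set.ncard_coe_finset]

lemma filter_odd_card (w : ℕ) (v : V2) :
    ((P w).filter (fun pre => (E pre v).1 = 1)).card = g v w := by
  have hsplit : (P w).filter (fun pre => (E pre v).1 = 1)
      = ((P w).filter (fun pre => E pre v = (1, 0))) ∪ ((P w).filter (fun pre => E pre v = (1, 1))) := by
    rw [← Finset.filter_or]
    apply Finset.filter_congr
    intro x _
    have : ∀ y : V2, (y.1 = 1 ↔ (y = (1, 0) ∨ y = (1, 1))) := by decide
    exact this _
  rw [hsplit, Finset.card_union_of_disjoint]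
  · rw [show g v w = Hc w v (1,0) + Hc w v (1,1) by
      rw [Hc_eq_Hm, Hc_eq_Hm]; rfl]
    rfl
  · rw [Finset.disjoint_left]
    intro x hx hy
    have h1 := (Finset.mem_filter.mp hx).2
    have h2 := (Finset.mem_filter.mp hy).2
    rw [h1] at h2
    exact absurd h2 (by decide)

lemma KF_card (c : ℕ) :
    (KF c).card = ∑ m ∈ Finset.Icc 1 ((c - 4) / 2), g (sv m) (c - 4 - 2 * m) := by
  unfold KF
  rw [Finset.card_biUnion]
  · apply Finset.sum_congr rfl
    intro m _
    rw [Finset.card_image_of_injective _ (List.append_left_injective (suff m))]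
    exact filter_odd_card _ _
  · intro m _ m' _ hmm
    rw [Function.onFun, Finset.disjoint_left]
    rintro x hx hy
    obtain ⟨p, -, rfl⟩ := Finset.mem_image.mp hx
    obtain ⟨q, -, he⟩ := Finset.mem_image.mp hy
    exact hmm (append_suff_inj he).1.symm

-- ### geometric sums and assembly
lemma Icc_split (K : ℕ) (hK : 1 ≤ K) :
    Finset.Icc 1 K = insert K (Finset.Icc 1 (K - 1)) := by
  ext x
  simp only [Finset.mem_Icc, Finset.mem_insert]
  omega

lemma geom (r : ℕ) : ∀ n : ℕ,
    3 * (∑ m ∈ Finset.Icc 1 n, (2:ℤ)^(2*(n-m)+r)) = 2^r * (4^n - 1) := by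
  intro n
  induction n with
  | zero =>
      rw [show Finset.Icc 1 0 = ∅ from rfl]
      simp
  | succ n ih =>
      rw [Icc_split (n+1) (by omega), Finset.sum_insert (by simp)]
      have h1 : ∀ m ∈ Finset.Icc 1 (n+1-1), (2:ℤ)^(2*(n+1-m)+r) = 4 * 2^(2*(n-m)+r) := by
        intro m hm
        have hm2 := Finset.mem_Icc.mp hm
        have : 2*(n+1-m)+r = (2*(n-m)+r) + 2 := by omega
        rw [this, pow_add]
        ring
      rw [show n+1-1 = n from rfl] at h1 ⊢
      rw [Finset.sum_congr rfl h1, ← Finset.mul_sum]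
      have h2 : 2*(n+1-(n+1))+r = r := by omega
      rw [h2]
      have h4 : (4:ℤ)^(n+1) = 4 * 4^n := by ring
      rw [h4]
      linarith

lemma sv_three (m : ℕ) :
    sv m = ((0:ZMod 2), (1:ZMod 2)) ∨ sv m = (1, 1) ∨ sv m = (1, 0) := by
  rw [sv_cases]
  split_ifs <;> simp

lemma g_small : g ((0:ZMod 2), (1:ZMod 2)) 0 = 0 ∧ g ((1:ZMod 2), (1:ZMod 2)) 0 = 1
    ∧ g ((1:ZMod 2), (0:ZMod 2)) 0 = 1 ∧ g ((0:ZMod 2), (1:ZMod 2)) 1 = 1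
    ∧ g ((1:ZMod 2), (1:ZMod 2)) 1 = 1 ∧ g ((1:ZMod 2), (0:ZMod 2)) 1 = 0 := by
  decide

-- evaluation of the correction sum
lemma D_eval (K r : ℕ) (hK : 1 ≤ K) (hr : r = 0 ∨ r = 1) :
    (∑ m ∈ Finset.Icc 1 (K-1),
      (if 2*(K-1-m)+r = 0 ∧ sv m = ((1:ZMod 2), (1:ZMod 2)) then (1:ℤ) else 0))
    = if r = 0 ∧ K % 3 = 2 then 1 else 0 := by
  have key : ∀ m ∈ Finset.Icc 1 (K-1),
      (if 2*(K-1-m)+r = 0 ∧ sv m = ((1:ZMod 2), (1:ZMod 2)) then (1:ℤ) else 0)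
      = (if m = K-1 then (if r = 0 ∧ sv (K-1) = ((1:ZMod 2), (1:ZMod 2)) then (1:ℤ) else 0) else 0) := by
    intro m hm
    have hm2 := Finset.mem_Icc.mp hm
    by_cases hmK : m = K - 1
    · rw [hmK, if_pos rfl]
      have h0 : 2*(K-1-(K-1))+r = r := by omega
      rw [h0]
    · rw [if_neg hmK, if_neg]
      rintro ⟨h1, -⟩
      exact hmK (by omega)
  rw [Finset.sum_congr rfl key, Finset.sum_ite_eq' (Finset.Icc 1 (K-1)) (K-1)]
  by_cases hK2 : 2 ≤ K
  · rw [if_pos (Finset.mem_Icc.mpr (by omega))]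
    rcases hr with rfl | rfl
    · simp only [true_and]
      by_cases h3 : K % 3 = 2
      · rw [if_pos, if_pos h3]
        rw [sv_cases, if_neg (by omega), if_pos (by omega)]
      · rw [if_neg, if_neg h3]
        rw [sv_cases]
        intro hcon
        split_ifs at hcon with h1 h2
        · exact absurd hcon (by decide)
        · exact h3 (by omega)
        · exact absurd hcon (by decide)
    · norm_num
  · have hK1 : K = 1 := by omega
    subst hK1
    simp


theorem M_recursion :
    M 4 = 0 ∧ M 5 = 0 ∧
      ∀ c : ℕ, 6 ≤ c →
        (M c : ℤ) = M (c - 2) + jac (c - 6) + (-1 : ℤ) ^ c * (if 3 ∣ c then 1 else 0) := by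
  refine ⟨?_, ?_, ?_⟩
  · rw [M_eq, KF_card, show (4-4)/2 = 0 from rfl,
      Finset.Icc_eq_empty (by norm_num), Finset.sum_empty]
  · rw [M_eq, KF_card, show (5-4)/2 = 0 from rfl,
      Finset.Icc_eq_empty (by norm_num), Finset.sum_empty]
  · intro c hc
    obtain ⟨K, r, hcK, h1K, hr⟩ :
        ∃ K r, c = 2*K + 4 + r ∧ 1 ≤ K ∧ (r = 0 ∨ r = 1) :=
      ⟨(c-4)/2, c - 4 - 2*((c-4)/2), by omega, by omega, by omega⟩
    have hK : (c-4)/2 = K := by omega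
    have hK2 : (c-2-4)/2 = K - 1 := by omega
    have htop : c - 4 - 2*K = r := by omega
    have hnotmem : K ∉ Finset.Icc 1 (K-1) := by
      rw [Finset.mem_Icc]; omega
    -- expansion of M c
    have e1 : (M c : ℤ) = (∑ m ∈ Finset.Icc 1 (K-1), (g (sv m) (c - 4 - 2*m) : ℤ))
        + (g (sv K) r : ℤ) := by
      rw [M_eq, KF_card, hK, Icc_split K h1K, Finset.sum_insert hnotmem, htop]
      push_cast
      ring
    -- expansion of M (c-2)
    have e2 : (M (c-2) : ℤ) = ∑ m ∈ Finset.Icc 1 (K-1), (g (sv m) (2*(K-1-m)+r) : ℤ) := by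
      rw [M_eq, KF_card, hK2]
      push_cast
      apply Finset.sum_congr rfl
      intro m hm
      have hm2 := Finset.mem_Icc.mp hm
      rw [show c-2-4-2*m = 2*(K-1-m)+r by omega]
    -- termwise step
    have e3 : ∀ m ∈ Finset.Icc 1 (K-1), (g (sv m) (c - 4 - 2*m) : ℤ)
        = ((g (sv m) (2*(K-1-m)+r) : ℤ) + 2^(2*(K-1-m)+r))
          - (if 2*(K-1-m)+r = 0 ∧ sv m = ((1:ZMod 2), (1:ZMod 2)) then (1:ℤ) else 0) := by
      intro m hm
      have hm2 := Finset.mem_Icc.mp hm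
      have hww : c - 4 - 2*m = 2*(K-1-m)+r + 2 := by omega
      have hstep := g_step (sv m) (sv_three m) (2*(K-1-m)+r)
      have hcast : ((g (sv m) (2*(K-1-m)+r+2) + (if 2*(K-1-m)+r = 0 ∧ sv m = ((1:ZMod 2), (1:ZMod 2)) then 1 else 0) : ℕ) : ℤ)
          = ((g (sv m) (2*(K-1-m)+r) + 2^(2*(K-1-m)+r) : ℕ) : ℤ) := by
        exact_mod_cast congrArg (fun n : ℕ => (n:ℤ)) hstep
      push_cast at hcast
      rw [hww]
      linarith [hcast]
    have main : (M c : ℤ) = (M (c-2) : ℤ)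
        + (∑ m ∈ Finset.Icc 1 (K-1), (2:ℤ)^(2*(K-1-m)+r))
        - (∑ m ∈ Finset.Icc 1 (K-1),
            (if 2*(K-1-m)+r = 0 ∧ sv m = ((1:ZMod 2), (1:ZMod 2)) then (1:ℤ) else 0))
        + (g (sv K) r : ℤ) := by
      rw [e1, Finset.sum_congr rfl e3, Finset.sum_sub_distrib, Finset.sum_add_distrib, e2]
    have hgeo := geom r (K-1)
    have hD := D_eval K r h1K hr
    have hjac : 3 * jac (c-6) = 2^r * 4^(K-1) - (-1:ℤ)^r := by
      rw [jac_eq_jacN, three_jacN]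
      have hc6 : c - 6 = 2*(K-1) + r := by omega
      rw [hc6, pow_add, pow_mul]
      have hs : ((-1:ℤ))^(2*(K-1)+r) = (-1)^r := by
        rw [pow_add, pow_mul]
        norm_num
      rw [hs]
      norm_num
      ring
    have hsign : ((-1:ℤ))^c = (-1)^r := by
      rw [show c = 2*(K+2) + r by omega, pow_add, pow_mul]
      norm_num
    rw [main, hD, hsign]
    have hK3 : K % 3 = 0 ∨ K % 3 = 1 ∨ K % 3 = 2 := by omega
    have hgs := g_small
    rcases hr with rfl | rfl <;> rcases hK3 with h3 | h3 | h3 <;>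
      [ (rw [show sv K = ((0:ZMod 2), (1:ZMod 2)) by rw [sv_cases, if_pos h3]]);
        (rw [show sv K = ((1:ZMod 2), (1:ZMod 2)) by
          rw [sv_cases, if_neg (by omega), if_pos h3]]);
        (rw [show sv K = ((1:ZMod 2), (0:ZMod 2)) by
          rw [sv_cases, if_neg (by omega), if_neg (by omega)]]);
        (rw [show sv K = ((0:ZMod 2), (1:ZMod 2)) by rw [sv_cases, if_pos h3]]);
        (rw [show sv K = ((1:ZMod 2), (1:ZMod 2)) by
          rw [sv_cases, if_neg (by omega), if_pos h3]]);
        (rw [show sv K = ((1:ZMod 2), (0:ZMod 2)) by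
          rw [sv_cases, if_neg (by omega), if_neg (by omega)]])]
    · rw [if_neg (by omega : ¬ (3 ∣ c)), if_neg (by omega : ¬ ((0:ℕ) = 0 ∧ K % 3 = 2))]
      rw [hgs.1]
      norm_num at hgeo hjac ⊢
      linarith
    · rw [if_pos (by omega : (3:ℕ) ∣ c), if_neg (by omega : ¬ ((0:ℕ) = 0 ∧ K % 3 = 2))]
      rw [hgs.2.1]
      norm_num at hgeo hjac ⊢
      linarith
    · rw [if_neg (by omega : ¬ (3 ∣ c)), if_pos (by omega : ((0:ℕ) = 0 ∧ K % 3 = 2))]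
      rw [hgs.2.2.1]
      norm_num at hgeo hjac ⊢
      linarith
    · rw [if_neg (by omega : ¬ (3 ∣ c)), if_neg (by omega : ¬ ((1:ℕ) = 0 ∧ K % 3 = 2))]
      rw [hgs.2.2.2.1]
      norm_num at hgeo hjac ⊢
      linarith
    · rw [if_neg (by omega : ¬ (3 ∣ c)), if_neg (by omega : ¬ ((1:ℕ) = 0 ∧ K % 3 = 2))]
      rw [hgs.2.2.2.2.1]
      norm_num at hgeo hjac ⊢
      linarith
    · rw [if_pos (by omega : (3:ℕ) ∣ c), if_neg (by omega : ¬ ((1:ℕ) = 0 ∧ K % 3 = 2))]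
      rw [hgs.2.2.2.2.2]
      norm_num at hgeo hjac ⊢
      linarith
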